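/- Let α ≥ ω₁ be a regular cardinal and 0 < n < ω. If C⁻(α,n) belongs to CH(⋃_{i∈I} 𝒜_i), where each 𝒜_i is a coreflective class of topological spaces, then there exists i₀ ∈ I such that C⁻(α,n) belongs to 𝒜_{i₀}. -/

import Mathlib

universe u v

/-- A class of topological spaces (in universe `u`): a predicate on spaces. -/
abbrev TopClass : Type (u + 1) := (X : Type u) → TopologicalSpace X → Prop

/-- A class of topological spaces is coreflective if it is closed under the formation of
topological sums and quotient spaces. -/
def IsCoreflective (C : TopClass.{u}) : Prop :=
  (∀ (ι : Type u) (X : ι → Type u) (t : (i : ι) → TopologicalSpace (X i)),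
      (∀ i, C (X i) (t i)) → C ((i : ι) × X i) (@instTopologicalSpaceSigma ι X t)) ∧
  (∀ (X Y : Type u) (tX : TopologicalSpace X) (tY : TopologicalSpace Y) (f : X → Y),
      @Topology.IsQuotientMap X Y tX tY f → C X tX → C Y tY)

/-- The coreflective hull of a class of spaces: the smallest coreflective class containing it. -/
def CH (A : TopClass.{u}) : TopClass.{u} :=
  fun X tX => ∀ C : TopClass.{u}, IsCoreflective C → (∀ Y tY, A Y tY → C Y tY) → C X tX

/-- `SCH A` is the class of all subspaces of members of `CH A`. -/
def SCH (A : TopClass.{u}) : TopClass.{u} :=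
  fun X tX => ∃ (Y : Type u) (tY : TopologicalSpace Y) (f : X → Y),
    CH A Y tY ∧ @Topology.IsEmbedding X Y tX tY f

/-- The class consisting of (the spaces homeomorphic to) a single space `A`. -/
def singleClass (A : Type u) (tA : TopologicalSpace A) : TopClass.{u} :=
  fun Y tY => Nonempty (@Homeomorph Y A tY tA)

/-- A class of topological spaces is hereditary if it is closed under subspaces. -/
def IsHereditary (C : TopClass.{u}) : Prop :=
  ∀ (X : Type u) (tX : TopologicalSpace X), C X tX →
    ∀ (Z : Type u) (tZ : TopologicalSpace Z) (f : Z → X), @Topology.IsEmbedding Z X tZ tX f →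
      C Z tZ

/-- The class `FG` of finitely generated (Alexandrov-discrete) topological spaces. -/
def FGClass : TopClass.{u} := fun X tX => @AlexandrovDiscrete X tX

/-- A filter space: a topological space with precisely one accumulation (non-isolated) point,
namely `a`. -/
def IsFilterSpace (X : Type u) [TopologicalSpace X] (a : X) : Prop :=
  ¬ IsOpen ({a} : Set X) ∧ ∀ x : X, x ≠ a → IsOpen ({x} : Set X)

/-- A filter subspace of a filter space `A` with accumulation point `a`: a subset containing `a`
such that `a` is in the closure of `B \ {a}`. -/
def IsFilterSubspace (A : Type u) [TopologicalSpace A] (a : A) (B : Set A) : Prop :=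
  a ∈ B ∧ a ∈ closure (B \ {a})

/-- `CIdx K m` represents the set `αⁿ` for `n = m+1`, where `K` plays the role of `α`. -/
def CIdx (K : Type u) : ℕ → Type u
  | 0 => K
  | m + 1 => K × CIdx K m

/-- Given a subset `U` of `(α × αⁿ) ∪ {∞}` and `ξ`, the set `{x ∈ αⁿ : (ξ,x) ∈ U} ∪ {∞}`. -/
def cslice {K J : Type u} (U : Set (Option (K × J))) (ξ : K) : Set (Option J) :=
  insert none (Option.some '' {x : J | Option.some (ξ, x) ∈ U})

/-- The openness predicate of the space `C⁻(α, m+1)`. -/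
def CIsOpen (K : Type u) : (m : ℕ) → Set (Option (CIdx K m)) → Prop
  | 0, U => none ∈ U → Cardinal.mk ((Option.some ⁻¹' U)ᶜ : Set K) < Cardinal.mk K
  | m + 1, U => none ∈ U →
      Cardinal.mk (({ξ : K | CIsOpen K m (cslice U ξ)}ᶜ : Set K)) < Cardinal.mk K

theorem cslice_mono {K J : Type u} {U V : Set (Option (K × J))} (h : U ⊆ V) (ξ : K) :
    cslice U ξ ⊆ cslice V ξ := by
  intro z hz
  rcases hz with hz | hz
  · exact Or.inl hz
  · rcases hz with ⟨x, hx, rfl⟩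
    exact Or.inr ⟨x, h hx, rfl⟩

theorem none_mem_cslice {K J : Type u} (U : Set (Option (K × J))) (ξ : K) :
    none ∈ cslice U ξ := Set.mem_insert _ _

theorem cisOpen_of_none_not_mem (K : Type u) (m : ℕ) (U : Set (Option (CIdx K m)))
    (h : none ∉ U) : CIsOpen K m U := by
  cases m with
  | zero => exact fun hU => absurd hU h
  | succ m => exact fun hU => absurd hU h

theorem cisOpen_mono (K : Type u) (m : ℕ) :
    ∀ U V : Set (Option (CIdx K m)), CIsOpen K m U → U ⊆ V → (none ∈ V → none ∈ U) →
      CIsOpen K m V := by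
  induction m with
  | zero =>
    intro U V hU hUV hnone hV
    refine lt_of_le_of_lt (Cardinal.mk_le_mk_of_subset ?_) (hU (hnone hV))
    intro k hk hU'
    exact hk (hUV hU')
  | succ m ih =>
    intro U V hU hUV hnone hV
    refine lt_of_le_of_lt (Cardinal.mk_le_mk_of_subset ?_) (hU (hnone hV))
    intro ξ hξ hopen
    exact hξ (ih _ _ hopen (cslice_mono hUV ξ) (fun _ => none_mem_cslice U ξ))

theorem cslice_univ {K J : Type u} (ξ : K) :
    cslice (Set.univ : Set (Option (K × J))) ξ = Set.univ := by
  ext z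
  cases z with
  | none => simp [cslice]
  | some j => simp [cslice]

theorem cisOpen_univ (K : Type u) [Nonempty K] (m : ℕ) : CIsOpen K m Set.univ := by
  cases m with
  | zero =>
    intro _
    show Cardinal.mk ((Option.some ⁻¹' (Set.univ : Set (Option K)))ᶜ : Set K) < Cardinal.mk K
    simp only [Set.preimage_univ, Set.compl_univ, Cardinal.mk_emptyCollection]
    exact Cardinal.mk_ne_zero K |>.bot_lt
  | succ m =>
    intro _
    have h : ({ξ : K | CIsOpen K m (cslice (Set.univ : Set (Option (CIdx K (m+1)))) ξ)}ᶜ : Set K)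
        = ∅ := by
      ext ξ
      simp only [Set.mem_compl_iff, Set.mem_setOf_eq, Set.mem_empty_iff_false, iff_false, not_not]
      have e : cslice (Set.univ : Set (Option (CIdx K (m+1)))) ξ = Set.univ := cslice_univ ξ
      rw [e]
      exact cisOpen_univ K m
    rw [h, Cardinal.mk_emptyCollection]
    exact Cardinal.mk_ne_zero K |>.bot_lt

theorem some_mem_cslice_iff {K J : Type u} (U : Set (Option (K × J))) (ξ : K) (x : J) :
    some x ∈ cslice U ξ ↔ some (ξ, x) ∈ U := by
  simp [cslice]

theorem cslice_inter {K J : Type u} (U V : Set (Option (K × J))) (ξ : K) :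
    cslice (U ∩ V) ξ = cslice U ξ ∩ cslice V ξ := by
  ext z
  cases z with
  | none => simp [none_mem_cslice]
  | some x => simp [some_mem_cslice_iff]

theorem cisOpen_inter (K : Type u) [Infinite K] (m : ℕ) :
    ∀ U V : Set (Option (CIdx K m)), CIsOpen K m U → CIsOpen K m V →
      CIsOpen K m (U ∩ V) := by
  induction m with
  | zero =>
    intro U V hU hV h
    have hsub : ((Option.some ⁻¹' (U ∩ V))ᶜ : Set K) ⊆
        (Option.some ⁻¹' U)ᶜ ∪ (Option.some ⁻¹' V)ᶜ := by
      intro k hk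
      by_contra hc
      exact hk (Set.mem_inter (not_not.mp (fun h1 => hc (Set.mem_union_left _ h1)))
        (not_not.mp (fun h2 => hc (Set.mem_union_right _ h2))))
    refine lt_of_le_of_lt (Cardinal.mk_le_mk_of_subset hsub) ?_
    refine lt_of_le_of_lt (Cardinal.mk_union_le _ _) ?_
    exact Cardinal.add_lt_of_lt (Cardinal.aleph0_le_mk K) (hU h.1) (hV h.2)
  | succ m ih =>
    intro U V hU hV h
    have hsub : ({ξ : K | CIsOpen K m (cslice (U ∩ V) ξ)}ᶜ : Set K) ⊆
        {ξ : K | CIsOpen K m (cslice U ξ)}ᶜ ∪ {ξ : K | CIsOpen K m (cslice V ξ)}ᶜ := by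
      intro ξ hξ
      by_contra hc
      simp only [Set.mem_union, Set.mem_compl_iff, Set.mem_setOf_eq, not_not] at hc hξ
      push_neg at hc
      have e : cslice (U ∩ V) ξ = cslice U ξ ∩ cslice V ξ := cslice_inter U V ξ
      exact hξ (by rw [e]; exact ih _ _ hc.1 hc.2)
    refine lt_of_le_of_lt (Cardinal.mk_le_mk_of_subset hsub) ?_
    refine lt_of_le_of_lt (Cardinal.mk_union_le _ _) ?_
    exact Cardinal.add_lt_of_lt (Cardinal.aleph0_le_mk K) (hU h.1) (hV h.2)

theorem cisOpen_sUnion (K : Type u) (m : ℕ) (S : Set (Set (Option (CIdx K m))))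
    (hS : ∀ U ∈ S, CIsOpen K m U) : CIsOpen K m (⋃₀ S) := by
  by_cases h : none ∈ ⋃₀ S
  · obtain ⟨U, hUS, hU⟩ := h
    exact cisOpen_mono K m U _ (hS U hUS) (Set.subset_sUnion_of_mem hUS) (fun _ => hU)
  · exact cisOpen_of_none_not_mem _ _ _ h

/-- The space `C⁻(α, m+1)` from the paper (so `m = 0` gives `C(α)` itself);
`K` plays the role of the set of ordinals `< α` and `none` plays the role of `∞`. -/
def CTop (K : Type u) [Infinite K] (m : ℕ) : TopologicalSpace (Option (CIdx K m)) where
  IsOpen := CIsOpen K m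
  isOpen_univ := cisOpen_univ K m
  isOpen_inter := cisOpen_inter K m
  isOpen_sUnion := cisOpen_sUnion K m

instance instCTop (K : Type u) [Infinite K] (m : ℕ) : TopologicalSpace (Option (CIdx K m)) :=
  CTop K m

theorem not_cisOpen_singleton_none (K : Type u) [Infinite K] (m : ℕ) :
    ¬ CIsOpen K m ({none} : Set (Option (CIdx K m))) := by
  induction m with
  | zero =>
    intro h
    have h2 := h rfl
    have h3 : Cardinal.mk K ≤ Cardinal.mk ((Option.some ⁻¹' ({none} : Set (Option K)))ᶜ : Set K) :=
      Cardinal.mk_le_of_injective (f := fun k => (⟨k, fun h => Option.some_ne_none k h⟩ :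
        ((Option.some ⁻¹' ({none} : Set (Option K)))ᶜ : Set K))) (fun a b h => congrArg Subtype.val h)
    exact absurd h2 (not_lt.mpr h3)
  | succ m ih =>
    intro h
    have h2 := h rfl
    have hsl : ∀ ξ : K, cslice ({none} : Set (Option (CIdx K (m+1)))) ξ = {none} := by
      intro ξ; ext z
      cases z with
      | none => simp [cslice]
      | some x => simp [cslice]; exact fun h => Option.some_ne_none _ h
    have : ({ξ : K | CIsOpen K m (cslice ({none} : Set (Option (CIdx K (m+1)))) ξ)}ᶜ : Set K)
        = Set.univ := by
      ext ξ
      simp only [Set.mem_compl_iff, Set.mem_setOf_eq, Set.mem_univ, iff_true, hsl]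
      exact ih
    rw [this, Cardinal.mk_univ] at h2
    exact lt_irrefl _ h2

theorem lemmaA (K : Type u) [Infinite K] : ∀ (m : ℕ) (U : Set (Option (CIdx K m))),
    none ∈ U → ¬ CIsOpen K m U →
    ∃ g : CIdx K m → CIdx K m, (∀ x, some (g x) ∉ U) ∧
      ∀ V, CIsOpen K m V → CIsOpen K m (Option.map g ⁻¹' V) := by
  intro m
  induction m with
  | zero =>
    intro U hU hno
    have hge : Cardinal.mk K ≤ Cardinal.mk ((Option.some ⁻¹' U)ᶜ : Set K) := by
      by_contra hc
      exact hno (fun _ => lt_of_not_ge hc)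
    have heq : Cardinal.mk K = Cardinal.mk ((Option.some ⁻¹' U)ᶜ : Set K) :=
      le_antisymm hge (Cardinal.mk_set_le _)
    obtain ⟨e⟩ := Cardinal.eq.mp heq
    refine ⟨fun ξ => (e ξ : K), fun ξ => (e ξ).2, ?_⟩
    intro V hV hnone
    have hnV : none ∈ V := hnone
    have hlt := hV hnV
    have hsub : (Option.some ⁻¹' (Option.map (fun ξ => (e ξ : K)) ⁻¹' V))ᶜ
        = (fun ξ => (e ξ : K)) ⁻¹' (Option.some ⁻¹' V)ᶜ := rfl
    refine lt_of_le_of_lt (le_of_le_of_eq (Cardinal.mk_le_mk_of_subset hsub.le)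
      rfl) ?_
    refine lt_of_le_of_lt (Cardinal.mk_preimage_of_injective _ _ ?_) hlt
    intro a b hab
    exact e.injective (Subtype.ext hab)
  | succ m ih =>
    intro U hU hno
    have hge : Cardinal.mk K ≤
        Cardinal.mk (({ξ : K | CIsOpen K m (cslice U ξ)}ᶜ : Set K)) := by
      by_contra hc
      exact hno (fun _ => lt_of_not_ge hc)
    have heq : Cardinal.mk K = Cardinal.mk (({ξ : K | CIsOpen K m (cslice U ξ)}ᶜ : Set K)) :=
      le_antisymm hge (Cardinal.mk_set_le _)
    obtain ⟨e⟩ := Cardinal.eq.mp heq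
    have hbad : ∀ ξ : K, ¬ CIsOpen K m (cslice U ((e ξ : K))) := fun ξ => (e ξ).2
    have H : ∀ ξ : K, ∃ g' : CIdx K m → CIdx K m,
        (∀ x, some (g' x) ∉ cslice U ((e ξ : K))) ∧
        ∀ V, CIsOpen K m V → CIsOpen K m (Option.map g' ⁻¹' V) := by
      intro ξ
      exact ih (cslice U ((e ξ : K))) (none_mem_cslice U _) (hbad ξ)
    choose gs hgs1 hgs2 using H
    refine ⟨fun p => ((e p.1 : K), gs p.1 p.2), ?_, ?_⟩
    · rintro ⟨ξ, y⟩ hmem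
      exact hgs1 ξ y ((some_mem_cslice_iff U _ _).mpr hmem)
    · intro V hV hnone
      have hnV : none ∈ V := hnone
      have hlt := hV hnV
      set g : CIdx K (m+1) → CIdx K (m+1) := fun p => ((e p.1 : K), gs p.1 p.2) with hg
      have hsl : ∀ ξ : K, cslice (Option.map g ⁻¹' V) ξ
          = Option.map (gs ξ) ⁻¹' (cslice V ((e ξ : K))) := by
        intro ξ; ext z
        cases z with
        | none => simp [none_mem_cslice, Option.map, Set.mem_preimage]; exact none_mem_cslice V _
        | some y => simp [some_mem_cslice_iff, hg]; exact (some_mem_cslice_iff V _ _).symm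
      have hsub : ({ξ : K | CIsOpen K m (cslice (Option.map g ⁻¹' V) ξ)}ᶜ : Set K)
          ⊆ (fun ξ : K => (e ξ : K)) ⁻¹' ({ξ : K | CIsOpen K m (cslice V ξ)}ᶜ : Set K) := by
        intro ξ hξ
        simp only [Set.mem_compl_iff, Set.mem_setOf_eq, Set.mem_preimage] at hξ ⊢
        intro hopen
        exact hξ (by rw [hsl]; exact hgs2 ξ _ hopen)
      refine lt_of_le_of_lt (Cardinal.mk_le_mk_of_subset hsub) ?_
      refine lt_of_le_of_lt (Cardinal.mk_preimage_of_injective _ _ ?_) hlt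
      intro a b hab
      exact e.injective (Subtype.ext hab)

open Topology

theorem isQuotientMap_iff' {X Y : Type u} (tX : TopologicalSpace X) (tY : TopologicalSpace Y)
    (f : X → Y) : @Topology.IsQuotientMap X Y tX tY f ↔
      Function.Surjective f ∧ ∀ s, IsOpen[tY] s ↔ IsOpen[tX] (f ⁻¹' s) := by
  letI := tX; letI := tY
  simp_rw [Topology.isQuotientMap_iff (f := f), isCoinducing_iff, and_comm, iff_comm]

theorem isOpen_sigma_iff' {ι : Type u} {Z : ι → Type u} (tZ : (i : ι) → TopologicalSpace (Z i))
    (s : Set ((i : ι) × Z i)) :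
    IsOpen[@instTopologicalSpaceSigma ι Z tZ] s ↔ ∀ i, IsOpen[tZ i] (Sigma.mk i ⁻¹' s) := by
  letI := tZ
  exact isOpen_sigma_iff (s := s)

theorem isOpen_coinduced' {X Y : Type u} (tX : TopologicalSpace X) (f : X → Y) (s : Set Y) :
    IsOpen[tX.coinduced f] s ↔ IsOpen[tX] (f ⁻¹' s) := by
  letI := tX
  exact isOpen_coinduced

theorem isQuotientMap_comp' {X Y Z : Type u} (tX : TopologicalSpace X) (tY : TopologicalSpace Y)
    (tZ : TopologicalSpace Z) (f : X → Y) (g : Y → Z)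
    (hf : @Topology.IsQuotientMap X Y tX tY f) (hg : @Topology.IsQuotientMap Y Z tY tZ g) :
    @Topology.IsQuotientMap X Z tX tZ (g ∘ f) := by
  letI := tX; letI := tY; letI := tZ
  exact hg.comp hf

/-- The class of quotients of topological sums of members of `A`. -/
def QClass (A : TopClass.{u}) : TopClass.{u} := fun X tX =>
  ∃ (ι : Type u) (Z : ι → Type u) (tZ : (i : ι) → TopologicalSpace (Z i))
    (f : ((i : ι) × Z i) → X),
    (∀ i, A (Z i) (tZ i)) ∧
      @Topology.IsQuotientMap _ _ (@instTopologicalSpaceSigma ι Z tZ) tX f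

theorem qclass_sub (A : TopClass.{u}) (X : Type u) (tX : TopologicalSpace X) (hX : A X tX) :
    QClass A X tX := by
  refine ⟨PUnit, fun _ => X, fun _ => tX, fun r => r.2, fun _ => hX, ?_⟩
  rw [isQuotientMap_iff']
  refine ⟨fun x => ⟨⟨⟨⟩, x⟩, rfl⟩, fun s => ?_⟩
  rw [isOpen_sigma_iff' (fun _ : PUnit => tX)]
  exact ⟨fun hs _ => hs, fun hs => hs ⟨⟩⟩

theorem qclass_coreflective (A : TopClass.{u}) : IsCoreflective (QClass A) := by
  constructor
  · intro ι X t hX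
    choose σ Z tZ f hmem hq using hX
    refine ⟨(i : ι) × σ i, fun j => Z j.1 j.2, fun j => tZ j.1 j.2,
      fun r => ⟨r.1.1, f r.1.1 ⟨r.1.2, r.2⟩⟩, fun j => hmem j.1 j.2, ?_⟩
    rw [isQuotientMap_iff']
    constructor
    · rintro ⟨i, x⟩
      obtain ⟨⟨j, w⟩, hw⟩ := ((isQuotientMap_iff' _ _ _).mp (hq i)).1 x
      exact ⟨⟨⟨i, j⟩, w⟩, by show (⟨i, f i ⟨j, w⟩⟩ : (i : ι) × X i) = ⟨i, x⟩; rw [hw]⟩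
    · intro s
      rw [isOpen_sigma_iff' t, isOpen_sigma_iff' (fun j : (i : ι) × σ i => tZ j.1 j.2)]
      constructor
      · rintro hs ⟨i, j⟩
        have h1 := ((isQuotientMap_iff' _ _ _).mp (hq i)).2 (Sigma.mk i ⁻¹' s) |>.mp (hs i)
        exact (isOpen_sigma_iff' (tZ i) _).mp h1 j
      · intro hs i
        refine (((isQuotientMap_iff' _ _ _).mp (hq i)).2 (Sigma.mk i ⁻¹' s)).mpr ?_
        rw [isOpen_sigma_iff' (tZ i)]
        intro j
        exact hs ⟨i, j⟩
  · intro X Y tX tY f hf hX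
    obtain ⟨ι, Z, tZ, g, hm, hg⟩ := hX
    exact ⟨ι, Z, tZ, f ∘ g, hm, isQuotientMap_comp' _ _ _ g f hg hf⟩

/-- let `α ≥ ω₁` be regular (the cardinality of `K`) and `0 < n < ω`.  If
`C⁻(α,n)` belongs to `CH (⋃ i, 𝒜 i)` where each `𝒜 i` is coreflective, then `C⁻(α,n)` belongs
to some `𝒜 i₀`.  Here `CTop K m` is the space `C⁻(α, m+1)`. -/
theorem stmt15 (K : Type u) [Infinite K] (hreg : (Cardinal.mk K).IsRegular)
    (hω1 : Cardinal.aleph 1 ≤ Cardinal.mk K) (m : ℕ)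
    {I : Type v} (𝒜 : I → TopClass.{u}) (h𝒜 : ∀ i, IsCoreflective (𝒜 i))
    (h : CH (fun Y tY => ∃ i, 𝒜 i Y tY) (Option (CIdx K m)) (CTop K m)) :
    ∃ i₀ : I, 𝒜 i₀ (Option (CIdx K m)) (CTop K m) := by
  classical
  obtain ⟨ι, Z, tZ, q, hmem, hq⟩ :=
    h (QClass (fun Y tY => ∃ i, 𝒜 i Y tY)) (qclass_coreflective _)
      (fun Y tY hY => qclass_sub _ Y tY hY)
  have hq' := (isQuotientMap_iff' _ _ q).mp hq
  have hnotopen : ¬ IsOpen[CTop K m] ({none} : Set (Option (CIdx K m))) :=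
    not_cisOpen_singleton_none K m
  have h1 : ¬ ∀ j, IsOpen[tZ j] (Sigma.mk j ⁻¹' (q ⁻¹' ({none} : Set (Option (CIdx K m))))) := by
    intro hall
    exact hnotopen ((hq'.2 {none}).mpr ((isOpen_sigma_iff' tZ _).mpr hall))
  push_neg at h1
  obtain ⟨j₀, hj₀⟩ := h1
  set p : Z j₀ → Option (CIdx K m) := fun z => q ⟨j₀, z⟩ with hp
  set τ : TopologicalSpace (Option (CIdx K m)) := (tZ j₀).coinduced p with hτ
  have hne : ¬ IsOpen[τ] ({none} : Set (Option (CIdx K m))) := by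
    rw [hτ, isOpen_coinduced' (tZ j₀) p]
    exact hj₀
  have hfiner : ∀ s : Set (Option (CIdx K m)), IsOpen[CTop K m] s → IsOpen[τ] s := by
    intro s hs
    rw [hτ, isOpen_coinduced' (tZ j₀) p]
    exact (isOpen_sigma_iff' tZ _).mp ((hq'.2 s).mp hs) j₀
  have hzne : Nonempty (Z j₀) := by
    by_contra hc
    rw [not_nonempty_iff] at hc
    apply hj₀
    have he : (Sigma.mk j₀ ⁻¹' (q ⁻¹' ({none} : Set (Option (CIdx K m))))) = ∅ :=
      Set.eq_empty_of_isEmpty _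
    rw [he]
    exact @isOpen_empty _ (tZ j₀)
  obtain ⟨i₀, hi₀⟩ := hmem j₀
  refine ⟨i₀, ?_⟩
  -- Step A : the filter space `(Option (CIdx K m), τ)` belongs to `𝒜 i₀`.
  have hsum1 := (h𝒜 i₀).1 (Option (Option (CIdx K m))) (fun _ => Z j₀) (fun _ => tZ j₀)
    (fun _ => hi₀)
  set F₁ : ((w : Option (Option (CIdx K m))) × Z j₀) → Option (CIdx K m) := fun r =>
    Option.elim r.1 (p r.2) (fun s => s) with hF₁
  have hqm1 : @Topology.IsQuotientMap _ _
      (@instTopologicalSpaceSigma (Option (Option (CIdx K m))) (fun _ => Z j₀) (fun _ => tZ j₀))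
      τ F₁ := by
    rw [isQuotientMap_iff']
    constructor
    · intro s
      exact ⟨⟨some s, Classical.choice hzne⟩, rfl⟩
    · intro s
      rw [isOpen_sigma_iff' (fun _ : Option (Option (CIdx K m)) => tZ j₀)]
      constructor
      · intro hs w
        cases w with
        | none =>
          rw [hτ, isOpen_coinduced' (tZ j₀) p] at hs
          exact hs
        | some s₀ =>
          by_cases hmem' : s₀ ∈ s
          · have he : (Sigma.mk (some s₀) ⁻¹' (F₁ ⁻¹' s)) = Set.univ := by
              ext z; simpa [hF₁] using hmem'
            rw [he]
            exact @isOpen_univ _ (tZ j₀)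
          · have he : (Sigma.mk (some s₀) ⁻¹' (F₁ ⁻¹' s)) = ∅ := by
              ext z; simpa [hF₁] using hmem'
            rw [he]
            exact @isOpen_empty _ (tZ j₀)
      · intro hall
        rw [hτ, isOpen_coinduced' (tZ j₀) p]
        exact hall none
  have hY : 𝒜 i₀ (Option (CIdx K m)) τ := (h𝒜 i₀).2 _ _ _ _ F₁ hqm1 hsum1
  -- Step B : `CTop K m` is a quotient of a sum of copies of `(Option (CIdx K m), τ)`.
  have hGex : ∀ U : {U : Set (Option (CIdx K m)) // none ∈ U ∧ ¬ CIsOpen K m U},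
      ∃ g : CIdx K m → CIdx K m, (∀ x, some (g x) ∉ U.1) ∧
        ∀ V, CIsOpen K m V → CIsOpen K m (Option.map g ⁻¹' V) :=
    fun U => lemmaA K m U.1 U.2.1 U.2.2
  choose G hG1 hG2 using hGex
  have hsum2 := (h𝒜 i₀).1 (Option {U : Set (Option (CIdx K m)) // none ∈ U ∧ ¬ CIsOpen K m U})
    (fun _ => Option (CIdx K m)) (fun _ => τ) (fun _ => hY)
  set F₂ : ((w : Option {U : Set (Option (CIdx K m)) // none ∈ U ∧ ¬ CIsOpen K m U}) ×
      Option (CIdx K m)) → Option (CIdx K m) := fun r =>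
    Option.elim r.1 r.2 (fun U => Option.map (G U) r.2) with hF₂
  have hqm2 : @Topology.IsQuotientMap _ _
      (@instTopologicalSpaceSigma _ (fun _ => Option (CIdx K m)) (fun _ => τ))
      (CTop K m) F₂ := by
    rw [isQuotientMap_iff']
    constructor
    · intro s
      exact ⟨⟨none, s⟩, rfl⟩
    · intro V
      rw [isOpen_sigma_iff'
        (fun _ : Option {U : Set (Option (CIdx K m)) // none ∈ U ∧ ¬ CIsOpen K m U} => τ)]
      constructor
      · intro hV w
        cases w with
        | none => exact hfiner V hV
        | some U => exact hfiner _ (hG2 U V hV)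
      · intro hall
        by_cases hn : none ∈ V
        · by_cases hop : CIsOpen K m V
          · exact hop
          · exfalso
            have hU := hall (some ⟨V, hn, hop⟩)
            have he : (Sigma.mk (some ⟨V, hn, hop⟩) ⁻¹' (F₂ ⁻¹' V))
                = ({none} : Set (Option (CIdx K m))) := by
              ext z
              cases z with
              | none => simp [hF₂, hn]
              | some x =>
                simp only [hF₂, Set.mem_preimage, Set.mem_singleton_iff]
                constructor
                · intro hx
                  exact absurd hx (hG1 ⟨V, hn, hop⟩ x)
                · intro hx
                  exact absurd hx (by simp)
            rw [he] at hU
            exact hne hU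
        · exact cisOpen_of_none_not_mem K m V hn
  exact (h𝒜 i₀).2 _ _ _ _ F₂ hqm2 hsum2
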